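/- For odd n ≥ 3, the complete symmetric digraph K_n* admits a neighbour-distinguishing proper arc-colouring with n colours obtained from a partition of the edges of K_n into n maximal matchings M_0, ..., M_{n-1}, where M_i misses exactly the vertex v_i: colour both arcs between v_i and v_j with k when v_i v_j ∈ M_k. For each vertex v_i, colour i is the unique colour missing from S^+(v_i) ∪ S^-(v_i), hence the colouring is neighbour-distinguishing. -/
import Mathlib


open Finset

section Defs

variable {V : Type*}

/-- A (proper) arc-colouring: arcs sharing a tail, or sharing a head, get distinct colours. -/
def ProperArc (A : V → V → Prop) (γ : V → V → ℕ) : Prop :=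
  (∀ u v w, A u v → A u w → v ≠ w → γ u v ≠ γ u w) ∧
  (∀ u v w, A u v → A w v → u ≠ w → γ u v ≠ γ w v)

/-- Colours appearing on outgoing arcs of `u`. -/
def outColors (A : V → V → Prop) (γ : V → V → ℕ) (u : V) : Set ℕ :=
  {c | ∃ v, A u v ∧ γ u v = c}

/-- Colours appearing on incoming arcs of `u`. -/
def inColors (A : V → V → Prop) (γ : V → V → ℕ) (u : V) : Set ℕ :=
  {c | ∃ v, A v u ∧ γ v u = c}

/-- `u` and `v` are distinguished by `γ`. -/
def Distinguished (A : V → V → Prop) (γ : V → V → ℕ) (u v : V) : Prop :=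
  (outColors A γ u, inColors A γ u) ≠ (outColors A γ v, inColors A γ v)

/-- Neighbour-distinguishing arc-colouring. -/
def NDArc (A : V → V → Prop) (γ : V → V → ℕ) : Prop :=
  ∀ u v, A u v → Distinguished A γ u v

/-- `D` has a neighbour-distinguishing proper arc-colouring with `k` colours. -/
def HasNDColoring (A : V → V → Prop) (k : ℕ) : Prop :=
  ∃ γ : V → V → ℕ, (∀ u v, A u v → γ u v < k) ∧ ProperArc A γ ∧ NDArc A γ

/-- `D` has a proper arc-colouring with `k` colours. -/
def HasProperColoring (A : V → V → Prop) (k : ℕ) : Prop :=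
  ∃ γ : V → V → ℕ, (∀ u v, A u v → γ u v < k) ∧ ProperArc A γ

/-- Outdegree of `u`. -/
def outDeg [Fintype V] (A : V → V → Prop) [DecidableRel A] (u : V) : ℕ :=
  (Finset.univ.filter fun v => A u v).card

/-- Indegree of `u`. -/
def inDeg [Fintype V] (A : V → V → Prop) [DecidableRel A] (u : V) : ℕ :=
  (Finset.univ.filter fun v => A v u).card

/-- Δ*(D) = max{Δ⁺(D), Δ⁻(D)}. -/
def maxDeg [Fintype V] (A : V → V → Prop) [DecidableRel A] : ℕ :=
  max (Finset.univ.sup (outDeg A)) (Finset.univ.sup (inDeg A))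

end Defs

/-- For odd n ≥ 3, the colouring of K_n* induced by a partition of E(K_n) into
n maximal matchings (M_i missing exactly v_i) is neighbour-distinguishing. -/
theorem stmt11 (n : ℕ) (hn : 3 ≤ n) (hodd : Odd n)
    (φ : Fin n → Fin n → ℕ)
    (hsym : ∀ i j, φ i j = φ j i)
    (hlt : ∀ i j, i ≠ j → φ i j < n)
    (hmatch : ∀ i j j' : Fin n, j ≠ i → j' ≠ i → j ≠ j' → φ i j ≠ φ i j')
    (hmiss : ∀ (i : Fin n) (c : ℕ), c < n → ((∃ j, j ≠ i ∧ φ i j = c) ↔ c ≠ i.val)) :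
    ProperArc (fun u v : Fin n => u ≠ v) φ ∧ NDArc (fun u v : Fin n => u ≠ v) φ := by
  constructor
  · constructor
    · intro u v w hv hw hne
      exact hmatch u v w (Ne.symm hv) (Ne.symm hw) hne
    · intro u v w huv hwv hne
      rw [hsym u v, hsym w v]
      exact hmatch v u w huv hwv hne
  · intro u v huv h
    have h1 : outColors (fun u v : Fin n => u ≠ v) φ u
        = outColors (fun u v : Fin n => u ≠ v) φ v := congrArg Prod.fst h
    have hmemv : (u.val : ℕ) ∈ outColors (fun u v : Fin n => u ≠ v) φ v := by
      have hne : (u.val : ℕ) ≠ v.val := fun hh => huv (Fin.ext hh)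
      obtain ⟨j, hj, hφ⟩ := (hmiss v u.val u.isLt).mpr hne
      exact ⟨j, Ne.symm hj, hφ⟩
    rw [← h1] at hmemv
    obtain ⟨j, hj, hφ⟩ := hmemv
    exact (hmiss u u.val u.isLt).mp ⟨j, Ne.symm hj, hφ⟩ rfl
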